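/- arXiv:2501.13101 — 2 statements merged into one kernel-verified Lean document; each statement's English description precedes it below -/
import Mathlib

section
/- Let D be a locally unbiased probability distribution over linear maps on 2^n×2^n complex matrices. Then for all P, Q ∈ P_n with supp(P) ≠ supp(Q): E_{C∼D}[C(P) ⊗ C(Q)] = 0. Consequently, for every Hermitian observable O = Σ_{P∈P_n} a_P P: E_{C∼D}[C(O) ⊗ C(O)] = Σ_{A⊆{1,…,n}} E_{C∼D}[(Σ_{P: supp(P)=A} a_P C(P)) ⊗ (Σ_{P: supp(P)=A} a_P C(P))]. -/
open scoped Kronecker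
open Matrix
open scoped ComplexOrder

set_option maxHeartbeats 1000000

noncomputable section

abbrev QMat := Matrix (Fin 2) (Fin 2) ℂ

abbrev NMat (n : ℕ) := Matrix (Fin n → Fin 2) (Fin n → Fin 2) ℂ

/-- The four single-qubit Pauli matrices `I, X, Y, Z`. -/
def pauli : Fin 4 → QMat :=
  ![1, !![0, 1; 1, 0], !![0, -Complex.I; Complex.I, 0], !![1, 0; 0, -1]]

/-- The non-identity Paulis `X, Y, Z`. -/
def pauliXYZ (i : Fin 3) : QMat := pauli i.succ

/-- The `n`-qubit Pauli string indexed by `s : Fin n → Fin 4`. -/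
def pauliString {n : ℕ} (s : Fin n → Fin 4) : NMat n :=
  Matrix.of fun i j => ∏ k, pauli (s k) (i k) (j k)

/-- Support of a Pauli string. -/
def psupp {n : ℕ} (s : Fin n → Fin 4) : Finset (Fin n) :=
  Finset.univ.filter fun k => s k ≠ 0

/-- The observable with real Pauli coefficients `a`. -/
def obsOf {n : ℕ} (a : (Fin n → Fin 4) → ℝ) : NMat n :=
  ∑ s : Fin n → Fin 4, (a s : ℂ) • pauliString s

/-- Normalized Frobenius norm squared, `‖M‖_F² = Tr[Mᴴ M]/dim`. -/
def frobSq {m : Type*} [Fintype m] (M : Matrix m m ℂ) : ℝ :=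
  (Matrix.trace (Mᴴ * M)).re / (Fintype.card m : ℝ)

def IsUnitary {m : Type*} [Fintype m] [DecidableEq m] (U : Matrix m m ℂ) : Prop :=
  U * Uᴴ = 1 ∧ Uᴴ * U = 1

/-- Hilbert–Schmidt adjoint of a (linear) map on matrices:
`Φ†(A) i j = conj (Tr[Aᴴ Φ(E_{ij})])`. -/
def hsAdj {m : Type*} [Fintype m] [DecidableEq m]
    (Φ : Matrix m m ℂ → Matrix m m ℂ) (A : Matrix m m ℂ) : Matrix m m ℂ :=
  Matrix.of fun i j => (starRingEnd ℂ) (Matrix.trace (Aᴴ * Φ (Matrix.single i j 1)))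

/-- Pauli transfer matrix entry of a single-qubit map. -/
def ptm (Φ : QMat → QMat) (a b : Fin 4) : ℂ :=
  Matrix.trace (pauli a * Φ (pauli b)) / 2

/-- Tensor product `Φ 0 ⊗ Φ 1 ⊗ ⋯ ⊗ Φ (n-1)` of single-qubit (linear) maps,
defined via the Pauli transfer matrices. -/
def tensorMap {n : ℕ} (Φ : Fin n → QMat → QMat) (M : NMat n) : NMat n :=
  ∑ s : Fin n → Fin 4, ∑ t : Fin n → Fin 4,
    ((∏ k, ptm (Φ k) (s k) (t k)) * (Matrix.trace (pauliString t * M) / ((2 : ℂ) ^ n))) •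
      pauliString s

/-- `n`-fold tensor power `Φ^{⊗n}` of a single-qubit (linear) map. -/
def tensorPow (n : ℕ) (Φ : QMat → QMat) : NMat n → NMat n :=
  tensorMap fun _ => Φ

/-- Tensor product of `n` single-qubit matrices. -/
def qprod {n : ℕ} (V : Fin n → QMat) : NMat n :=
  Matrix.of fun i j => ∏ k, V k (i k) (j k)

/-- The single-qubit normal-form map `N'` with parameters `(D, t)`:
`N'(I) = I + Σ t_i σ_i` and `N'(σ_i) = D_i σ_i`. -/
def normalForm (D t : Fin 3 → ℝ) (M : QMat) : QMat :=
  (Matrix.trace M / 2) • (1 + ∑ i, (t i : ℂ) • pauliXYZ i) +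
    ∑ i, ((D i : ℂ) * (Matrix.trace (pauliXYZ i * M) / 2)) • pauliXYZ i

/-- `Υ(D,t) = max_{‖a‖₂=1} Σ_i a_i² D_i² + (Σ_i a_i t_i)²`. -/
def Upsilon (D t : Fin 3 → ℝ) : ℝ :=
  sSup { r : ℝ | ∃ a : Fin 3 → ℝ, (∑ i, a i ^ 2) = 1 ∧
    r = (∑ i, a i ^ 2 * D i ^ 2) + (∑ i, a i * t i) ^ 2 }

/-- Choi matrix of a single-qubit map. -/
def choi (Φ : QMat → QMat) : Matrix (Fin 2 × Fin 2) (Fin 2 × Fin 2) ℂ :=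
  Matrix.of fun p q => Φ (Matrix.single p.1 q.1 1) p.2 q.2

/-- A single-qubit quantum channel: linear, trace preserving, completely positive. -/
structure IsChannel (Φ : QMat → QMat) : Prop where
  linear : IsLinearMap ℂ Φ
  tracePreserving : ∀ M, Matrix.trace (Φ M) = Matrix.trace M
  completelyPositive : (choi Φ).PosSemidef

/-- Unitary 1-design (finitely supported distribution). -/
def IsOneDesign {ι : Type*} [Fintype ι] (w : ι → ℝ) (W : ι → QMat) : Prop :=
  ∀ M : QMat, ∑ i, (w i : ℂ) • (W i * M * (W i)ᴴ) = (Matrix.trace M / 2) • (1 : QMat)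

/-- The swap (flip) operator on two qubits. -/
def swapOp : Matrix (Fin 2 × Fin 2) (Fin 2 × Fin 2) ℂ :=
  Matrix.of fun p q => if p.1 = q.2 ∧ p.2 = q.1 then 1 else 0

/-- Unitary 2-design: the twirl of any `M` matches the Haar value
`c_I • 1 + c_F • F` (closed form of the Haar average on `U(2)`). -/
def IsTwoDesign {ι : Type*} [Fintype ι] (w : ι → ℝ) (W : ι → QMat) : Prop :=
  ∀ M : Matrix (Fin 2 × Fin 2) (Fin 2 × Fin 2) ℂ,
    ∑ i, (w i : ℂ) • ((W i ⊗ₖ W i) * M * (W i ⊗ₖ W i)ᴴ) =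
      ((Matrix.trace M - Matrix.trace (swapOp * M) / 2) / 3) •
          (1 : Matrix (Fin 2 × Fin 2) (Fin 2 × Fin 2) ℂ) +
        ((Matrix.trace (swapOp * M) - Matrix.trace M / 2) / 3) • swapOp

/-- `η`-approximate scrambler (finitely supported distribution over `U(2)`). -/
def IsApproxScrambler {ι : Type*} [Fintype ι] (η : ℝ) (w : ι → ℝ) (U : ι → QMat) : Prop :=
  (∀ a b : Fin 4, a ≠ b →
      ∑ i, (w i : ℂ) • (((U i)ᴴ * pauli a * U i) ⊗ₖ ((U i)ᴴ * pauli b * U i)) = 0) ∧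
    ∀ a b : Fin 3,
      ∑ i, w i * ((Matrix.trace (pauliXYZ a * U i * pauliXYZ b * (U i)ᴴ)).re / 2) ^ 2 ≤
        (1 + 2 * η) / 3

/-- Locally unbiased distribution over linear maps on `n`-qubit matrices. -/
def LocallyUnbiased (n : ℕ) {ι : Type*} [Fintype ι] (w : ι → ℝ)
    (C : ι → NMat n → NMat n) : Prop :=
  ∃ (m : ℕ) (v : Fin n → Fin m → ℝ) (W : Fin n → Fin m → QMat),
    (∀ j k, 0 ≤ v j k) ∧ (∀ j, ∑ k, v j k = 1) ∧ (∀ j k, IsUnitary (W j k)) ∧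
      (∀ j, IsOneDesign (v j) (W j)) ∧
      ∀ A B : NMat n,
        ∑ i, (w i : ℂ) • (C i A ⊗ₖ C i B) =
          ∑ i, ∑ f : Fin n → Fin m,
            ((w i * ∏ j, v j (f j) : ℝ) : ℂ) •
              (C i (qprod (fun j => W j (f j)) * A * (qprod fun j => W j (f j))ᴴ) ⊗ₖ
                C i (qprod (fun j => W j (f j)) * B * (qprod fun j => W j (f j))ᴴ))

/-- Pauli-invariant distribution over linear maps on `n`-qubit matrices. -/
def PauliInvariant (n : ℕ) {ι : Type*} [Fintype ι] (w : ι → ℝ)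
    (C : ι → NMat n → NMat n) : Prop :=
  ∀ A B : NMat n,
    ∑ i, (w i : ℂ) • (C i A ⊗ₖ C i B) =
      ((4 : ℂ) ^ n)⁻¹ • ∑ r : Fin n → Fin 4, ∑ i, (w i : ℂ) •
        (C i (pauliString r * A * pauliString r) ⊗ₖ C i (pauliString r * B * pauliString r))

/-- Fourier coefficient `Φ_γ(C) = Π_j 2^{-n} Tr[P_j C_j(P_{j-1})]` of a Pauli path. -/
def pathCoeff {n L : ℕ} (Cs : Fin L → NMat n → NMat n)
    (γ : Fin (L + 1) → Fin n → Fin 4) : ℂ :=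
  ∏ j : Fin L,
    (Matrix.trace (pauliString (γ j.succ) * Cs j (pauliString (γ j.castSucc))) / ((2 : ℂ) ^ n))

/-- Path weight `|γ| = Σ_{j=1}^L |P_j|`. -/
def pathWeight {n L : ℕ} (γ : Fin (L + 1) → Fin n → Fin 4) : ℕ :=
  ∑ j : Fin L, (psupp (γ j.succ)).card

/-- The (non-physical) map `Ñ_p` with `Ñ_p(I) = (N(I) - pI)/(1-p)` and
`Ñ_p(σ) = N(σ)/(1-p)` for `σ ∈ {X,Y,Z}`. -/
def tildeMap (N : QMat → QMat) (p : ℝ) (M : QMat) : QMat :=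
  (Matrix.trace M / 2) • (((1 : ℂ) - (p : ℂ))⁻¹ • (N 1 - (p : ℂ) • (1 : QMat))) +
    ∑ i : Fin 3, (Matrix.trace (pauliXYZ i * M) / 2) • (((1 : ℂ) - (p : ℂ))⁻¹ • N (pauliXYZ i))

/-- The layers of an `L`-layered noisy circuit: `C_j(ρ) = N^{⊗n}(U_j ρ U_j†)` for `j < L`,
and the last layer is followed by the single-qubit layer `V`. -/
def layerMaps {n L : ℕ} (Nm : QMat → QMat) (U : Fin L → NMat n) (Vt : NMat n)
    (j : Fin L) (ρ : NMat n) : NMat n :=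
  if j.val = L - 1 then Vt * tensorPow n Nm (U j * ρ * (U j)ᴴ) * Vtᴴ
  else tensorPow n Nm (U j * ρ * (U j)ᴴ)

/-- Composition `C_L ∘ ⋯ ∘ C_1` of the layers. -/
def circuitOf {n L : ℕ} (lm : Fin L → NMat n → NMat n) (ρ : NMat n) : NMat n :=
  (List.finRange L).foldl (fun σ j => lm j σ) ρ

/-- Operator (spectral) norm of a matrix, as the `ℓ²→ℓ²` operator norm. -/
def specNorm {m : Type*} [Fintype m] (M : Matrix m m ℂ) : ℝ :=
  Real.sqrt (sSup { r : ℝ | ∃ v : m → ℂ,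
    (∑ x, Complex.normSq (v x)) = 1 ∧ r = ∑ x, Complex.normSq (M.mulVec v x) })

/-- Trace norm `‖M‖₁ = Tr √(Mᴴ M)` (sum of singular values). -/
def traceNorm {m : Type*} [Fintype m] [DecidableEq m] (M : Matrix m m ℂ) : ℝ :=
  (Matrix.trace
    ((Matrix.posSemidef_conjTranspose_mul_self M).1.eigenvectorUnitary.1 *
      Matrix.diagonal (((↑) : ℝ → ℂ) ∘ (Real.sqrt ·) ∘ (Matrix.posSemidef_conjTranspose_mul_self M).1.eigenvalues) *
      (star (Matrix.posSemidef_conjTranspose_mul_self M).1.eigenvectorUnitary : Matrix m m ℂ))).re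


section Aux

open Finset

lemma trace_pauli_eq_zero {a : Fin 4} (h : a ≠ 0) : Matrix.trace (pauli a) = 0 := by
  fin_cases a
  · exact absurd rfl h
  all_goals simp [pauli, Matrix.trace_fin_two]

lemma qprod_mul {n : ℕ} (V U : Fin n → QMat) : qprod V * qprod U = qprod fun k => V k * U k := by
  ext i j
  simp only [qprod, Matrix.mul_apply, Matrix.of_apply]
  conv_rhs => rw [Finset.prod_univ_sum]
  simp [← Finset.prod_mul_distrib, Fintype.piFinset_univ]

lemma qprod_conjTranspose {n : ℕ} (V : Fin n → QMat) : (qprod V)ᴴ = qprod fun k => (V k)ᴴ := by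
  ext i j
  simp [qprod, Matrix.conjTranspose_apply, star_prod]

lemma qprod_eq_zero {n : ℕ} {V : Fin n → QMat} {k0 : Fin n} (h : V k0 = 0) : qprod V = 0 := by
  ext i j
  simp only [qprod, Matrix.of_apply, Matrix.zero_apply]
  exact Finset.prod_eq_zero (Finset.mem_univ k0) (by simp [h])

lemma qprod_slot {n m : ℕ} (k0 : Fin n) (base : Fin n → QMat) (c : Fin m → ℂ)
    (F : Fin m → QMat) :
    ∑ x, c x • qprod (Function.update base k0 (F x)) =
      qprod (Function.update base k0 (∑ x, c x • F x)) := by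
  ext i j
  have key : ∀ (M : QMat), (∏ k, Function.update base k0 M k (i k) (j k))
      = M (i k0) (j k0) * ∏ k ∈ Finset.univ.erase k0, base k (i k) (j k) := by
    intro M
    rw [← Finset.mul_prod_erase _ _ (Finset.mem_univ k0), Function.update_self]
    congr 1
    exact Finset.prod_congr rfl fun k hk => by
      rw [Function.update_of_ne (Finset.ne_of_mem_erase hk)]
  simp only [Matrix.sum_apply, Matrix.smul_apply, qprod, Matrix.of_apply, smul_eq_mul, key,
    Finset.sum_mul, mul_assoc]

lemma sum_smul_kron_right {l o ι : Type*} [Fintype ι] (c : ι → ℂ)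
    (K : Matrix l l ℂ) (D : ι → Matrix o o ℂ) :
    ∑ x, c x • (K ⊗ₖ D x) = K ⊗ₖ (∑ x, c x • D x) := by
  ext ⟨i, p⟩ ⟨j, q⟩
  simp only [Matrix.sum_apply, Matrix.smul_apply, Matrix.kroneckerMap_apply, smul_eq_mul,
    Finset.mul_sum]
  exact Finset.sum_congr rfl fun x _ => by ring

lemma sum_smul_kron_left {l o ι : Type*} [Fintype ι] (c : ι → ℂ)
    (K : Matrix o o ℂ) (D : ι → Matrix l l ℂ) :
    ∑ x, c x • (D x ⊗ₖ K) = (∑ x, c x • D x) ⊗ₖ K := by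
  ext ⟨i, p⟩ ⟨j, q⟩
  simp only [Matrix.sum_apply, Matrix.smul_apply, Matrix.kroneckerMap_apply, smul_eq_mul,
    Finset.sum_mul]
  exact Finset.sum_congr rfl fun x _ => by ring

lemma kron_zero_right {l o : Type*} (K : Matrix l l ℂ) :
    K ⊗ₖ (0 : Matrix o o ℂ) = 0 := by
  ext ⟨i, p⟩ ⟨j, q⟩; simp

lemma kron_zero_left {l o : Type*} (K : Matrix l l ℂ) :
    (0 : Matrix o o ℂ) ⊗ₖ K = 0 := by
  ext ⟨i, p⟩ ⟨j, q⟩; simp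

lemma kron_sum_sum {l o ι κ : Type*} (s : Finset ι) (t : Finset κ)
    (f : ι → Matrix l l ℂ) (g : κ → Matrix o o ℂ) :
    (∑ i ∈ s, f i) ⊗ₖ (∑ j ∈ t, g j) = ∑ i ∈ s, ∑ j ∈ t, f i ⊗ₖ g j := by
  ext ⟨i, p⟩ ⟨j, q⟩
  simp only [Matrix.sum_apply, Matrix.kroneckerMap_apply, Finset.sum_mul, Finset.mul_sum]
  exact Finset.sum_comm

lemma smul_kron_smul {l o : Type*} (a b : ℂ) (A : Matrix l l ℂ) (B : Matrix o o ℂ) :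
    (a • A) ⊗ₖ (b • B) = (a * b) • (A ⊗ₖ B) := by
  ext ⟨i, p⟩ ⟨j, q⟩
  simp only [Matrix.smul_apply, Matrix.kroneckerMap_apply, smul_eq_mul]
  ring

lemma sum_rotate {α β γ M : Type*} [AddCommMonoid M] (sa : Finset α) (sb : Finset β)
    (sc : Finset γ) (f : α → β → γ → M) :
    ∑ a ∈ sa, ∑ b ∈ sb, ∑ c ∈ sc, f a b c = ∑ b ∈ sb, ∑ c ∈ sc, ∑ a ∈ sa, f a b c := by
  rw [Finset.sum_comm]
  exact Finset.sum_congr rfl fun _ _ => Finset.sum_comm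

/-- Orthogonality part of Statement 8, as a standalone lemma. -/
lemma LU_orth (n : ℕ) {ι : Type*} [Fintype ι] (w : ι → ℝ)
    (C : ι → NMat n → NMat n) (hlin : ∀ i, IsLinearMap ℂ (C i))
    (hLU : LocallyUnbiased n w C) :
    ∀ s s' : Fin n → Fin 4, psupp s ≠ psupp s' →
      ∑ i, (w i : ℂ) • (C i (pauliString s) ⊗ₖ C i (pauliString s')) = 0 := by
  obtain ⟨m, v, W, hv0, hv1, hWu, h1d, hmain⟩ := hLU
  intro s s' hne
  have hk : ∃ k0 : Fin n, (s k0 = 0 ∧ s' k0 ≠ 0) ∨ (s k0 ≠ 0 ∧ s' k0 = 0) := by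
    by_contra hc
    push_neg at hc
    apply hne
    ext k
    simp only [psupp, Finset.mem_filter, Finset.mem_univ, true_and]
    have := hc k
    tauto
  obtain ⟨k0, hk0⟩ := hk
  have hm : Nonempty (Fin m) := by
    by_contra hmm
    have : IsEmpty (Fin m) := not_nonempty_iff.mp hmm
    have h1 := h1d k0 1
    rw [Finset.univ_eq_empty, Finset.sum_empty] at h1
    have h2 : (0 : QMat) 0 0 = ((Matrix.trace (1 : QMat) / 2) • (1 : QMat)) 0 0 := by rw [h1]
    simp [Matrix.trace_fin_two, Matrix.one_apply] at h2
  obtain ⟨x0⟩ := hm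
  rw [hmain (pauliString s) (pauliString s')]
  apply Finset.sum_eq_zero
  intro i _
  have conj : ∀ (f : Fin n → Fin m) (t : Fin n → Fin 4),
      qprod (fun j => W j (f j)) * pauliString t * (qprod fun j => W j (f j))ᴴ =
        qprod fun k => W k (f k) * pauli (t k) * (W k (f k))ᴴ := by
    intro f t
    have h0 : pauliString t = qprod fun k => pauli (t k) := rfl
    rw [h0, qprod_conjTranspose, qprod_mul, qprod_mul]
  simp only [conj]
  rw [← Equiv.sum_comp (Equiv.funSplitAt k0 (Fin m)).symm, Fintype.sum_prod_type,
    Finset.sum_comm]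
  apply Finset.sum_eq_zero
  intro g _
  set e := (Equiv.funSplitAt k0 (Fin m)).symm with he
  have hfk0 : ∀ x : Fin m, e (x, g) k0 = x := by
    intro x; simp [he, Equiv.funSplitAt, Equiv.piSplitAt]
  have hfj : ∀ (x : Fin m) (j : Fin n) (h : j ≠ k0), e (x, g) j = g ⟨j, h⟩ := by
    intro x j h; simp [he, Equiv.funSplitAt, Equiv.piSplitAt, h]
  set R : ℝ := ∏ j ∈ Finset.univ.erase k0, v j (e (x0, g) j) with hR
  have hprod : ∀ x : Fin m, (∏ j, v j (e (x, g) j)) = v k0 x * R := by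
    intro x
    rw [← Finset.mul_prod_erase _ _ (Finset.mem_univ k0), hfk0]
    congr 1
    refine Finset.prod_congr rfl fun j hj => ?_
    rw [hfj x j (Finset.ne_of_mem_erase hj), hfj x0 j (Finset.ne_of_mem_erase hj)]
  rcases hk0 with ⟨hs0, hs0'⟩ | ⟨hs0, hs0'⟩
  · -- s k0 = 0, s' k0 ≠ 0 : right tensor factor averages to zero
    have hA : ∀ x : Fin m,
        (fun k => W k (e (x, g) k) * pauli (s k) * (W k (e (x, g) k))ᴴ)
          = fun k => W k (e (x0, g) k) * pauli (s k) * (W k (e (x0, g) k))ᴴ := by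
      intro x; funext k
      by_cases hk : k = k0
      · subst hk
        rw [hs0, show pauli 0 = (1 : QMat) from rfl, mul_one, mul_one,
          (hWu _ _).1, (hWu _ _).1]
      · rw [hfj x k hk, hfj x0 k hk]
    set Bb : Fin n → QMat := fun k => W k (e (x0, g) k) * pauli (s' k) * (W k (e (x0, g) k))ᴴ
      with hBb
    have hB : ∀ x : Fin m,
        (fun k => W k (e (x, g) k) * pauli (s' k) * (W k (e (x, g) k))ᴴ)
          = Function.update Bb k0 (W k0 x * pauli (s' k0) * (W k0 x)ᴴ) := by
      intro x; funext k
      by_cases hk : k = k0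
      · subst hk; rw [Function.update_self, hfk0]
      · rw [Function.update_of_ne hk]
        simp only [hBb]
        rw [hfj x k hk, hfj x0 k hk]
    have hdesign : ∑ x : Fin m, (v k0 x : ℂ) • (W k0 x * pauli (s' k0) * (W k0 x)ᴴ) = 0 := by
      rw [h1d k0 (pauli (s' k0)), trace_pauli_eq_zero hs0']
      simp
    have inner : ∑ x : Fin m, (v k0 x : ℂ) •
        C i (qprod (Function.update Bb k0 (W k0 x * pauli (s' k0) * (W k0 x)ᴴ))) = 0 := by
      have hlsum : ∀ (c : Fin m → ℂ) (M : Fin m → NMat n),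
          C i (∑ x, c x • M x) = ∑ x, c x • C i (M x) := by
        intro c M
        rw [show C i = ⇑(IsLinearMap.mk' (C i) (hlin i)) from rfl, map_sum]
        simp_rw [_root_.map_smul]
      rw [← hlsum, qprod_slot, hdesign,
        qprod_eq_zero (k0 := k0) (by rw [Function.update_self]), (hlin i).map_zero]
    calc ∑ x : Fin m, ((w i * ∏ j, v j (e (x, g) j) : ℝ) : ℂ) •
          (C i (qprod fun k => W k (e (x, g) k) * pauli (s k) * (W k (e (x, g) k))ᴴ) ⊗ₖ
            C i (qprod fun k => W k (e (x, g) k) * pauli (s' k) * (W k (e (x, g) k))ᴴ))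
        = ∑ x : Fin m, ((w i * R : ℝ) : ℂ) • ((v k0 x : ℂ) •
            ((C i (qprod fun k => W k (e (x0, g) k) * pauli (s k) * (W k (e (x0, g) k))ᴴ)) ⊗ₖ
              C i (qprod (Function.update Bb k0 (W k0 x * pauli (s' k0) * (W k0 x)ᴴ))))) := by
          refine Finset.sum_congr rfl fun x _ => ?_
          rw [hA x, hB x, hprod x, smul_smul]
          congr 1
          push_cast
          ring
      _ = ((w i * R : ℝ) : ℂ) •
            ((C i (qprod fun k => W k (e (x0, g) k) * pauli (s k) * (W k (e (x0, g) k))ᴴ)) ⊗ₖ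
              ∑ x : Fin m, (v k0 x : ℂ) •
                C i (qprod (Function.update Bb k0 (W k0 x * pauli (s' k0) * (W k0 x)ᴴ)))) := by
          rw [← Finset.smul_sum, sum_smul_kron_right]
      _ = 0 := by rw [inner, kron_zero_right, smul_zero]
  · -- s k0 ≠ 0, s' k0 = 0 : left tensor factor averages to zero
    have hA : ∀ x : Fin m,
        (fun k => W k (e (x, g) k) * pauli (s' k) * (W k (e (x, g) k))ᴴ)
          = fun k => W k (e (x0, g) k) * pauli (s' k) * (W k (e (x0, g) k))ᴴ := by
      intro x; funext k
      by_cases hk : k = k0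
      · subst hk
        rw [hs0', show pauli 0 = (1 : QMat) from rfl, mul_one, mul_one,
          (hWu _ _).1, (hWu _ _).1]
      · rw [hfj x k hk, hfj x0 k hk]
    set Bb : Fin n → QMat := fun k => W k (e (x0, g) k) * pauli (s k) * (W k (e (x0, g) k))ᴴ
      with hBb
    have hB : ∀ x : Fin m,
        (fun k => W k (e (x, g) k) * pauli (s k) * (W k (e (x, g) k))ᴴ)
          = Function.update Bb k0 (W k0 x * pauli (s k0) * (W k0 x)ᴴ) := by
      intro x; funext k
      by_cases hk : k = k0
      · subst hk; rw [Function.update_self, hfk0]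
      · rw [Function.update_of_ne hk]
        simp only [hBb]
        rw [hfj x k hk, hfj x0 k hk]
    have hdesign : ∑ x : Fin m, (v k0 x : ℂ) • (W k0 x * pauli (s k0) * (W k0 x)ᴴ) = 0 := by
      rw [h1d k0 (pauli (s k0)), trace_pauli_eq_zero hs0]
      simp
    have inner : ∑ x : Fin m, (v k0 x : ℂ) •
        C i (qprod (Function.update Bb k0 (W k0 x * pauli (s k0) * (W k0 x)ᴴ))) = 0 := by
      have hlsum : ∀ (c : Fin m → ℂ) (M : Fin m → NMat n),
          C i (∑ x, c x • M x) = ∑ x, c x • C i (M x) := by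
        intro c M
        rw [show C i = ⇑(IsLinearMap.mk' (C i) (hlin i)) from rfl, map_sum]
        simp_rw [_root_.map_smul]
      rw [← hlsum, qprod_slot, hdesign,
        qprod_eq_zero (k0 := k0) (by rw [Function.update_self]), (hlin i).map_zero]
    calc ∑ x : Fin m, ((w i * ∏ j, v j (e (x, g) j) : ℝ) : ℂ) •
          (C i (qprod fun k => W k (e (x, g) k) * pauli (s k) * (W k (e (x, g) k))ᴴ) ⊗ₖ
            C i (qprod fun k => W k (e (x, g) k) * pauli (s' k) * (W k (e (x, g) k))ᴴ))
        = ∑ x : Fin m, ((w i * R : ℝ) : ℂ) • ((v k0 x : ℂ) •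
            ((C i (qprod (Function.update Bb k0 (W k0 x * pauli (s k0) * (W k0 x)ᴴ)))) ⊗ₖ
              C i (qprod fun k => W k (e (x0, g) k) * pauli (s' k) * (W k (e (x0, g) k))ᴴ))) := by
          refine Finset.sum_congr rfl fun x _ => ?_
          rw [hA x, hB x, hprod x, smul_smul]
          congr 1
          push_cast
          ring
      _ = ((w i * R : ℝ) : ℂ) •
            ((∑ x : Fin m, (v k0 x : ℂ) •
                C i (qprod (Function.update Bb k0 (W k0 x * pauli (s k0) * (W k0 x)ᴴ)))) ⊗ₖ
              C i (qprod fun k => W k (e (x0, g) k) * pauli (s' k) * (W k (e (x0, g) k))ᴴ)) := by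
          rw [← Finset.smul_sum, sum_smul_kron_left]
      _ = 0 := by rw [inner, kron_zero_left, smul_zero]

end Aux

/-- (Orthogonality for locally unbiased distributions.) If `D` is
locally unbiased then `E_C[C(P) ⊗ C(Q)] = 0` whenever `supp(P) ≠ supp(Q)`; consequently
the two-fold twirl of any observable splits as a sum over supports. -/
theorem stmt_8 (n : ℕ) {ι : Type*} [Fintype ι] (w : ι → ℝ)
    (C : ι → NMat n → NMat n)
    (hw0 : ∀ i, 0 ≤ w i) (hw1 : ∑ i, w i = 1)
    (hlin : ∀ i, IsLinearMap ℂ (C i))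
    (hLU : LocallyUnbiased n w C) :
    (∀ s s' : Fin n → Fin 4, psupp s ≠ psupp s' →
        ∑ i, (w i : ℂ) • (C i (pauliString s) ⊗ₖ C i (pauliString s')) = 0) ∧
    (∀ a : (Fin n → Fin 4) → ℝ,
        ∑ i, (w i : ℂ) • (C i (obsOf a) ⊗ₖ C i (obsOf a)) =
          ∑ A : Finset (Fin n), ∑ i, (w i : ℂ) •
            ((∑ s ∈ Finset.univ.filter fun s : Fin n → Fin 4 => psupp s = A,
                (a s : ℂ) • C i (pauliString s)) ⊗ₖ
              (∑ s ∈ Finset.univ.filter fun s : Fin n → Fin 4 => psupp s = A,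
                (a s : ℂ) • C i (pauliString s)))) := by
  have part1 := LU_orth n w C hlin hLU
  refine ⟨part1, fun a => ?_⟩
  have hCobs : ∀ i, C i (obsOf a) = ∑ s : Fin n → Fin 4, (a s : ℂ) • C i (pauliString s) := by
    intro i
    rw [obsOf, show C i = ⇑(IsLinearMap.mk' (C i) (hlin i)) from rfl, map_sum]
    simp_rw [_root_.map_smul]
  set T : (Fin n → Fin 4) → (Fin n → Fin 4) →
      Matrix ((Fin n → Fin 2) × (Fin n → Fin 2)) ((Fin n → Fin 2) × (Fin n → Fin 2)) ℂ :=
    fun s t => ∑ i, (w i : ℂ) • (C i (pauliString s) ⊗ₖ C i (pauliString t)) with hT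
  have hLHS : ∑ i, (w i : ℂ) • (C i (obsOf a) ⊗ₖ C i (obsOf a)) =
      ∑ s : Fin n → Fin 4, ∑ t : Fin n → Fin 4, ((a s : ℂ) * (a t : ℂ)) • T s t := by
    simp_rw [hCobs, kron_sum_sum, smul_kron_smul, Finset.smul_sum]
    rw [sum_rotate]
    refine Finset.sum_congr rfl fun s _ => ?_
    refine Finset.sum_congr rfl fun t _ => ?_
    rw [hT, Finset.smul_sum]
    exact Finset.sum_congr rfl fun i _ => smul_comm _ _ _
  have hRHS : (∑ A : Finset (Fin n), ∑ i, (w i : ℂ) •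
        ((∑ s ∈ Finset.univ.filter fun s : Fin n → Fin 4 => psupp s = A,
            (a s : ℂ) • C i (pauliString s)) ⊗ₖ
          (∑ s ∈ Finset.univ.filter fun s : Fin n → Fin 4 => psupp s = A,
            (a s : ℂ) • C i (pauliString s)))) =
      ∑ s : Fin n → Fin 4,
        ∑ t ∈ Finset.univ.filter fun t : Fin n → Fin 4 => psupp t = psupp s,
          ((a s : ℂ) * (a t : ℂ)) • T s t := by
    have step1 : ∀ A : Finset (Fin n), ∑ i, (w i : ℂ) •
          ((∑ s ∈ Finset.univ.filter fun s : Fin n → Fin 4 => psupp s = A,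
              (a s : ℂ) • C i (pauliString s)) ⊗ₖ
            (∑ s ∈ Finset.univ.filter fun s : Fin n → Fin 4 => psupp s = A,
              (a s : ℂ) • C i (pauliString s))) =
        ∑ s ∈ Finset.univ.filter fun s : Fin n → Fin 4 => psupp s = A,
          ∑ t ∈ Finset.univ.filter fun t : Fin n → Fin 4 => psupp t = A,
            ((a s : ℂ) * (a t : ℂ)) • T s t := by
      intro A
      simp_rw [kron_sum_sum, smul_kron_smul, Finset.smul_sum]
      rw [sum_rotate]
      refine Finset.sum_congr rfl fun s _ => ?_
      refine Finset.sum_congr rfl fun t _ => ?_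
      rw [hT, Finset.smul_sum]
      exact Finset.sum_congr rfl fun i _ => smul_comm _ _ _
    simp_rw [step1]
    rw [← Finset.sum_fiberwise Finset.univ (fun s : Fin n → Fin 4 => psupp s)
      (fun s => ∑ t ∈ Finset.univ.filter fun t : Fin n → Fin 4 => psupp t = psupp s,
        ((a s : ℂ) * (a t : ℂ)) • T s t)]
    refine Finset.sum_congr rfl fun A _ => ?_
    refine Finset.sum_congr rfl fun s hs => ?_
    have hsA : psupp s = A := (Finset.mem_filter.mp hs).2
    rw [hsA]
  rw [hLHS, hRHS]
  refine Finset.sum_congr rfl fun s _ => ?_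
  rw [← Finset.sum_filter_add_sum_filter_not Finset.univ
    (fun t : Fin n → Fin 4 => psupp t = psupp s)]
  have hzero : ∑ t ∈ Finset.univ.filter fun t : Fin n → Fin 4 => ¬psupp t = psupp s,
      ((a s : ℂ) * (a t : ℂ)) • T s t = 0 := by
    refine Finset.sum_eq_zero fun t ht => ?_
    have hne : psupp s ≠ psupp t := fun h => (Finset.mem_filter.mp ht).2 h.symm
    simp only [hT]
    rw [part1 s t hne, smul_zero]
  rw [hzero, add_zero]


end
end

section
/- Let O be a Hermitian 2^n×2^n matrix, let c > 0, and let D be a probability distribution over density matrices (positive semidefinite 2^n×2^n matrices with trace 1) such that the operator norm of the average state satisfies ‖E_{ρ∼D}[ρ]‖_∞ ≤ c/2^n. Then E_{ρ∼D} (Tr[O ρ])² ≤ c · ‖O‖_F². -/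
open scoped Kronecker
open Matrix
open scoped ComplexOrder

noncomputable section

/-- Cauchy–Schwarz for the standard complex dot product. -/
lemma cs_dot' {m : Type*} [Fintype m] (u w : m → ℂ) :
    ‖∑ x, (starRingEnd ℂ) (u x) * w x‖ ≤
      Real.sqrt (∑ x, Complex.normSq (u x)) * Real.sqrt (∑ x, Complex.normSq (w x)) := by
  classical
  let U : EuclideanSpace ℂ m := (WithLp.equiv 2 (m → ℂ)).symm u
  let W : EuclideanSpace ℂ m := (WithLp.equiv 2 (m → ℂ)).symm w
  have h := norm_inner_le_norm (𝕜 := ℂ) U W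
  have hinner : inner ℂ U W = ∑ x, (starRingEnd ℂ) (u x) * w x := by
    simp [PiLp.inner_apply, U, W, RCLike.inner_apply, mul_comm]
  have hU : ‖U‖ = Real.sqrt (∑ x, Complex.normSq (u x)) := by
    rw [EuclideanSpace.norm_eq]; congr 1
    exact Finset.sum_congr rfl fun x _ => by simp [U, Complex.sq_norm]
  have hW : ‖W‖ = Real.sqrt (∑ x, Complex.normSq (w x)) := by
    rw [EuclideanSpace.norm_eq]; congr 1
    exact Finset.sum_congr rfl fun x _ => by simp [W, Complex.sq_norm]
  rwa [hinner, hU, hW] at h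

lemma trace_conjT_mul' {m : Type*} [Fintype m] (A B : Matrix m m ℂ) :
    Matrix.trace (Aᴴ * B) = ∑ p : m × m, (starRingEnd ℂ) (A p.1 p.2) * B p.1 p.2 := by
  rw [Fintype.sum_prod_type, Matrix.trace, Finset.sum_comm]
  simp [Matrix.diag, Matrix.mul_apply, Matrix.conjTranspose_apply]

lemma re_trace_conjT_mul_self' {m : Type*} [Fintype m] (A : Matrix m m ℂ) :
    (Matrix.trace (Aᴴ * A)).re = ∑ p : m × m, Complex.normSq (A p.1 p.2) := by
  rw [trace_conjT_mul', Complex.re_sum]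
  refine Finset.sum_congr rfl fun p _ => ?_
  rw [mul_comm, Complex.mul_conj]; simp

lemma dot_mulVec_le' {m : Type*} [Fintype m] (M : Matrix m m ℂ) (v : m → ℂ) :
    (∑ x, (starRingEnd ℂ) (v x) * M.mulVec v x).re ≤
      specNorm M * ∑ x, Complex.normSq (v x) := by
  classical
  set S := { r : ℝ | ∃ v : m → ℂ,
    (∑ x, Complex.normSq (v x)) = 1 ∧ r = ∑ x, Complex.normSq (M.mulVec v x) } with hS
  have hbdd : BddAbove S := by
    refine ⟨∑ p : m × m, Complex.normSq (M p.1 p.2), ?_⟩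
    rintro r ⟨u, hu, rfl⟩
    rw [Fintype.sum_prod_type]
    refine Finset.sum_le_sum fun x _ => ?_
    have h := cs_dot' (fun y => (starRingEnd ℂ) (M x y)) u
    simp only [RingHom.id_apply, starRingEnd_self_apply, Complex.normSq_conj, hu,
      Real.sqrt_one, mul_one] at h
    have h2 : ‖M.mulVec u x‖ ≤ Real.sqrt (∑ y, Complex.normSq (M x y)) := by
      simpa [Matrix.mulVec, dotProduct] using h
    have h3 : Complex.normSq (M.mulVec u x) = ‖M.mulVec u x‖ ^ 2 := by
      simp [Complex.sq_norm]
    rw [h3]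
    calc ‖M.mulVec u x‖ ^ 2 ≤ Real.sqrt (∑ y, Complex.normSq (M x y)) ^ 2 :=
          pow_le_pow_left₀ (norm_nonneg _) h2 2
      _ = ∑ y, Complex.normSq (M x y) :=
          Real.sq_sqrt (Finset.sum_nonneg fun y _ => Complex.normSq_nonneg _)
  set s := ∑ x, Complex.normSq (v x) with hs
  have hs0 : 0 ≤ s := Finset.sum_nonneg fun x _ => Complex.normSq_nonneg _
  rcases eq_or_lt_of_le hs0 with h0 | hpos
  · have hv0 : v = 0 := by
      funext x
      have := (Finset.sum_eq_zero_iff_of_nonneg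
        (fun x _ => Complex.normSq_nonneg (v x))).mp h0.symm x (Finset.mem_univ x)
      exact Complex.normSq_eq_zero.mp this
    simp [hv0, ← h0]
  · set t := Real.sqrt s with ht
    have ht0 : 0 < t := Real.sqrt_pos.mpr hpos
    have htc : (t : ℂ) ≠ 0 := by exact_mod_cast ht0.ne'
    set u : m → ℂ := fun x => (t : ℂ)⁻¹ * v x with hu
    have hvu : v = (t : ℂ) • u := by
      funext x; simp [hu, mul_comm]; field_simp
    have hnt : Complex.normSq (t : ℂ) = s := by
      rw [Complex.normSq_ofReal, ht, Real.mul_self_sqrt hs0]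
    have hu1 : (∑ x, Complex.normSq (u x)) = 1 := by
      simp only [hu, Complex.normSq_mul, Complex.normSq_inv, hnt]
      rw [← Finset.mul_sum, ← hs, inv_mul_cancel₀ hpos.ne']
    have hmem : (∑ x, Complex.normSq (M.mulVec u x)) ∈ S := ⟨u, hu1, rfl⟩
    have hle : (∑ x, Complex.normSq (M.mulVec u x)) ≤ sSup S := le_csSup hbdd hmem
    have hMv : (∑ x, Complex.normSq (M.mulVec v x)) =
        s * ∑ x, Complex.normSq (M.mulVec u x) := by
      rw [hvu, Finset.mul_sum]
      refine Finset.sum_congr rfl fun x _ => ?_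
      rw [Matrix.mulVec_smul]
      simp [Complex.normSq_mul, hnt]
    have hcs := cs_dot' v (M.mulVec v)
    have hre : (∑ x, (starRingEnd ℂ) (v x) * M.mulVec v x).re ≤
        ‖∑ x, (starRingEnd ℂ) (v x) * M.mulVec v x‖ := Complex.re_le_norm _
    have h4 : Real.sqrt (∑ x, Complex.normSq (M.mulVec v x)) ≤ t * Real.sqrt (sSup S) := by
      rw [hMv]
      calc Real.sqrt (s * ∑ x, Complex.normSq (M.mulVec u x))
          ≤ Real.sqrt (s * sSup S) :=
            Real.sqrt_le_sqrt (mul_le_mul_of_nonneg_left hle hs0)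
        _ = t * Real.sqrt (sSup S) := Real.sqrt_mul hs0 _
    calc (∑ x, (starRingEnd ℂ) (v x) * M.mulVec v x).re
        ≤ Real.sqrt s * Real.sqrt (∑ x, Complex.normSq (M.mulVec v x)) :=
          le_trans hre (by simpa [← hs] using hcs)
      _ ≤ t * (t * Real.sqrt (sSup S)) :=
          mul_le_mul_of_nonneg_left h4 (le_of_lt ht0)
      _ = specNorm M * s := by
          rw [specNorm, ← hS, ← mul_assoc, ht, Real.mul_self_sqrt hs0]
          ring

open scoped MatrixOrder in
lemma key1' {m : Type*} [Fintype m] [DecidableEq m] (O ρ : Matrix m m ℂ)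
    (hO : O.IsHermitian) (hρ : ρ.PosSemidef) (h1 : Matrix.trace ρ = 1) :
    ‖Matrix.trace (O * ρ)‖ ^ 2 ≤ (Matrix.trace (O * O * ρ)).re := by
  have h0 : 0 ≤ ρ := Matrix.nonneg_iff_posSemidef.mpr hρ
  set S := CFC.sqrt ρ with hSdef
  have hSH : Sᴴ = S := IsSelfAdjoint.of_nonneg (CFC.sqrt_nonneg ρ)
  have hSS : S * S = ρ := CFC.sqrt_mul_sqrt_self ρ h0
  have e1 : Matrix.trace (O * ρ) = Matrix.trace (Sᴴ * (O * S)) := by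
    rw [hSH, ← hSS, ← mul_assoc, Matrix.trace_mul_comm]
  have hA : (∑ p : m × m, Complex.normSq (S p.1 p.2)) = 1 := by
    rw [← re_trace_conjT_mul_self', hSH, hSS, h1, Complex.one_re]
  have hB : (∑ p : m × m, Complex.normSq ((O * S) p.1 p.2)) =
      (Matrix.trace (O * O * ρ)).re := by
    rw [← re_trace_conjT_mul_self']
    congr 1
    rw [Matrix.conjTranspose_mul, hSH, hO,
      show (S * O) * (O * S) = S * ((O * O) * S) from by simp [mul_assoc],
      Matrix.trace_mul_comm, mul_assoc, hSS]
  have hcs := cs_dot' (fun p : m × m => S p.1 p.2) (fun p : m × m => (O * S) p.1 p.2)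
  rw [hA, Real.sqrt_one, one_mul] at hcs
  have hner : ‖Matrix.trace (O * ρ)‖ ≤
      Real.sqrt (∑ p : m × m, Complex.normSq ((O * S) p.1 p.2)) := by
    rw [e1, trace_conjT_mul']; exact hcs
  have hB0 : 0 ≤ ∑ p : m × m, Complex.normSq ((O * S) p.1 p.2) :=
    Finset.sum_nonneg fun p _ => Complex.normSq_nonneg _
  calc ‖Matrix.trace (O * ρ)‖ ^ 2
      ≤ Real.sqrt (∑ p : m × m, Complex.normSq ((O * S) p.1 p.2)) ^ 2 :=
        pow_le_pow_left₀ (norm_nonneg _) hner 2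
    _ = ∑ p : m × m, Complex.normSq ((O * S) p.1 p.2) := Real.sq_sqrt hB0
    _ = (Matrix.trace (O * O * ρ)).re := hB

/-- (Second moments for low-average ensembles.) If the average state of
an ensemble of density matrices has operator norm at most `c/2^n`, then
`E_ρ (Tr[O ρ])² ≤ c·‖O‖_F²` for every Hermitian observable `O`. -/
theorem stmt_19 (n : ℕ) {ι : Type*} [Fintype ι] (w : ι → ℝ)
    (hw0 : ∀ i, 0 ≤ w i) (hw1 : ∑ i, w i = 1)
    (ρ : ι → NMat n) (hρ : ∀ i, (ρ i).PosSemidef) (hρ1 : ∀ i, Matrix.trace (ρ i) = 1)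
    (c : ℝ) (hc : 0 < c)
    (O : NMat n) (hO : O.IsHermitian)
    (havg : specNorm (∑ i, (w i : ℂ) • ρ i) ≤ c / 2 ^ n) :
    ∑ i, w i * ‖Matrix.trace (O * ρ i)‖ ^ 2 ≤ c * frobSq O := by
  classical
  set ρb : NMat n := ∑ i, (w i : ℂ) • ρ i with hρbdef
  set T : ℝ := ∑ p : (Fin n → Fin 2) × (Fin n → Fin 2), Complex.normSq (O p.1 p.2) with hTdef
  have hT0 : 0 ≤ T := Finset.sum_nonneg fun p _ => Complex.normSq_nonneg _
  have step2 : ∑ i, w i * (Matrix.trace (O * O * ρ i)).re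
      = (Matrix.trace (O * O * ρb)).re := by
    rw [hρbdef, Finset.mul_sum, Matrix.trace_sum, Complex.re_sum]
    refine Finset.sum_congr rfl fun i _ => ?_
    rw [Matrix.mul_smul, Matrix.trace_smul]
    simp [smul_eq_mul, Complex.mul_re]
  have step3 : (Matrix.trace (O * O * ρb)).re ≤ specNorm ρb * T := by
    rw [← Matrix.trace_mul_cycle]
    have hcol : ∀ x, ((O * ρb * O) x x).re ≤ specNorm ρb * ∑ y, Complex.normSq (O y x) := by
      intro x
      have hc : ∀ y, (starRingEnd ℂ) (O y x) = O x y := fun y => by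
        conv_rhs => rw [← hO]
        simp [Matrix.conjTranspose_apply]
      have he : (O * ρb * O) x x
          = ∑ y, (starRingEnd ℂ) (O y x) * ρb.mulVec (fun z => O z x) y := by
        simp only [Matrix.mul_apply, Matrix.mulVec, dotProduct, hc,
          Finset.mul_sum, Finset.sum_mul]
        rw [Finset.sum_comm]
        exact Finset.sum_congr rfl fun y _ => Finset.sum_congr rfl fun z _ => by ring
      rw [he]
      exact dot_mulVec_le' ρb (fun z => O z x)
    calc (Matrix.trace (O * ρb * O)).re = ∑ x, ((O * ρb * O) x x).re := by
          rw [Matrix.trace, Complex.re_sum]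
          exact Finset.sum_congr rfl fun x _ => rfl
      _ ≤ ∑ x, specNorm ρb * ∑ y, Complex.normSq (O y x) :=
          Finset.sum_le_sum fun x _ => hcol x
      _ = specNorm ρb * T := by
          rw [← Finset.mul_sum]
          congr 1
          rw [hTdef, Fintype.sum_prod_type, Finset.sum_comm]
  have hcard : (Fintype.card (Fin n → Fin 2) : ℝ) = 2 ^ n := by
    simp [Fintype.card_fun]
  have hfrob : frobSq O = T / 2 ^ n := by
    rw [frobSq, re_trace_conjT_mul_self', hcard, hTdef]
  have final1 : ∑ i, w i * ‖Matrix.trace (O * ρ i)‖ ^ 2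
      ≤ (Matrix.trace (O * O * ρb)).re := by
    rw [← step2]
    exact Finset.sum_le_sum fun i _ =>
      mul_le_mul_of_nonneg_left (key1' O (ρ i) hO (hρ i) (hρ1 i)) (hw0 i)
  calc ∑ i, w i * ‖Matrix.trace (O * ρ i)‖ ^ 2
      ≤ specNorm ρb * T := final1.trans step3
    _ ≤ (c / 2 ^ n) * T := mul_le_mul_of_nonneg_right havg hT0
    _ = c * frobSq O := by rw [hfrob]; ring


end
end
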